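/- Let ξ be a random variable taking values in [0, ∞) with E[ξ]=1 and finite third moment. Then for all p ∈ (0, 1/2), log E[(1 + p(ξ-1))^{-1}] ≤ p^2 Var(ξ) + 8 p^3 E[|ξ-1|^3]. -/

import Mathlib

open MeasureTheory

lemma inv_aux {x : ℝ} (hx : -(1/2) ≤ x) :
    (1 + x)⁻¹ ≤ 1 - x + x^2 + 2*|x|^3 := by
  have h1 : (0:ℝ) < 1 + x := by linarith
  have heq : (1 + x)⁻¹ = 1 - x + x^2 - x^3/(1+x) := by
    field_simp; ring
  rw [heq]
  have : -x^3 ≤ 2*|x|^3 * (1+x) := by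
    rcases abs_cases x with ⟨h, h'⟩ | ⟨h, h'⟩ <;> rw [h]
    · nlinarith
    · nlinarith [mul_nonneg (by nlinarith : (0:ℝ) ≤ -x^3) (by linarith : (0:ℝ) ≤ 1 + 2*x)]
  have h4 := (div_le_iff₀ h1).mpr this
  have h5 : -x^3/(1+x) = -(x^3/(1+x)) := by rw [neg_div]
  linarith

theorem log_integral_inv_le
    {Ω : Type*} [MeasurableSpace Ω] (μ : Measure Ω) [IsProbabilityMeasure μ]
    (ξ : Ω → ℝ) (hmeas : Measurable ξ)
    (hpos : ∀ᵐ ω ∂μ, 0 ≤ ξ ω)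
    (hint : Integrable ξ μ) (hmean : ∫ ω, ξ ω ∂μ = 1)
    (h2 : Integrable (fun ω => (ξ ω - 1)^2) μ)
    (h3 : Integrable (fun ω => |ξ ω - 1|^3) μ)
    (p : ℝ) (hp0 : 0 < p) (hp1 : p < 1/2) :
    Real.log (∫ ω, (1 + p * (ξ ω - 1))⁻¹ ∂μ) ≤
      p^2 * (∫ ω, (ξ ω - 1)^2 ∂μ) + 8 * p^3 * (∫ ω, |ξ ω - 1|^3 ∂μ) := by
  set f : Ω → ℝ := fun ω => (1 + p * (ξ ω - 1))⁻¹ with hf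
  have hxlb : ∀ᵐ ω ∂μ, -(1/2) ≤ p * (ξ ω - 1) := by
    filter_upwards [hpos] with ω hω
    nlinarith
  have hfm : Measurable f :=
    (measurable_const.add (measurable_const.mul (hmeas.sub measurable_const))).inv
  have hfpos : ∀ᵐ ω ∂μ, 0 < f ω := by
    filter_upwards [hxlb] with ω hω
    exact inv_pos.mpr (by linarith)
  have hfint : Integrable f μ := by
    refine Integrable.mono' (integrable_const 2) hfm.aestronglyMeasurable ?_
    filter_upwards [hxlb] with ω hω
    have h1 : (0:ℝ) < 1 + p * (ξ ω - 1) := by linarith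
    rw [Real.norm_eq_abs, abs_of_pos (inv_pos.mpr h1)]
    calc (1 + p * (ξ ω - 1))⁻¹ ≤ ((1:ℝ)/2)⁻¹ := by
          apply inv_anti₀ (by norm_num) (by linarith)
    _ = 2 := by norm_num
  have hpt : ∀ᵐ ω ∂μ, f ω ≤
      1 - p * (ξ ω - 1) + p^2 * (ξ ω - 1)^2 + 2 * p^3 * |ξ ω - 1|^3 := by
    filter_upwards [hxlb] with ω hω
    have key := inv_aux hω
    have habs : |p * (ξ ω - 1)|^3 = p^3 * |ξ ω - 1|^3 := by
      rw [abs_mul, abs_of_pos hp0, mul_pow]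
    calc f ω ≤ 1 - p * (ξ ω - 1) + (p * (ξ ω - 1))^2 + 2*|p * (ξ ω - 1)|^3 := key
    _ = 1 - p * (ξ ω - 1) + p^2 * (ξ ω - 1)^2 + 2 * p^3 * |ξ ω - 1|^3 := by
        rw [habs, mul_pow]; ring
  have hsub : Integrable (fun ω => ξ ω - 1) μ := hint.sub (integrable_const 1)
  have hB : Integrable (fun ω => 1 - p * (ξ ω - 1)) μ := by
    exact (integrable_const 1).sub (hsub.const_mul p)
  have hC : Integrable (fun ω => 1 - p * (ξ ω - 1) + p^2 * (ξ ω - 1)^2) μ := by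
    exact hB.add (h2.const_mul (p^2))
  have hrhs : Integrable (fun ω =>
      1 - p * (ξ ω - 1) + p^2 * (ξ ω - 1)^2 + 2 * p^3 * |ξ ω - 1|^3) μ := by
    exact hC.add (h3.const_mul (2 * p^3))
  have e1 : ∫ ω, (ξ ω - 1) ∂μ = 0 := by
    rw [integral_sub hint (integrable_const 1), hmean]; simp
  have hIle : (∫ ω, f ω ∂μ) ≤
      1 + p^2 * (∫ ω, (ξ ω - 1)^2 ∂μ) + 2 * p^3 * (∫ ω, |ξ ω - 1|^3 ∂μ) := by
    calc (∫ ω, f ω ∂μ) ≤ ∫ ω, (1 - p * (ξ ω - 1) + p^2 * (ξ ω - 1)^2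
          + 2 * p^3 * |ξ ω - 1|^3) ∂μ := integral_mono_ae hfint hrhs hpt
    _ = 1 + p^2 * (∫ ω, (ξ ω - 1)^2 ∂μ) + 2 * p^3 * (∫ ω, |ξ ω - 1|^3 ∂μ) := by
        rw [integral_add hC (h3.const_mul (2*p^3)),
          integral_add hB (h2.const_mul (p^2)),
          integral_sub (integrable_const 1) (hsub.const_mul p),
          integral_const_mul, integral_const_mul, integral_const_mul, e1]
        simp
  have h2nn : 0 ≤ ∫ ω, (ξ ω - 1)^2 ∂μ := integral_nonneg fun ω => sq_nonneg _
  have h3nn : 0 ≤ ∫ ω, |ξ ω - 1|^3 ∂μ :=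
    integral_nonneg fun ω => pow_nonneg (abs_nonneg _) 3
  set I := ∫ ω, f ω ∂μ with hI
  have hIpos : 0 < I := by
    refine (integral_pos_iff_support_of_nonneg_ae ?_ hfint).mpr ?_
    · filter_upwards [hfpos] with ω h; exact h.le
    · by_contra hcon
      push_neg at hcon
      have h0 : μ (Function.support f) = 0 := le_antisymm hcon zero_le
      have hzero : ∀ᵐ ω ∂μ, f ω = 0 := by
        rw [ae_iff]; exact h0
      obtain ⟨ω, h1', h2'⟩ := (hfpos.and hzero).exists
      linarith
  calc Real.log I ≤ I - 1 := Real.log_le_sub_one_of_pos hIpos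
  _ ≤ p^2 * (∫ ω, (ξ ω - 1)^2 ∂μ) + 2 * p^3 * (∫ ω, |ξ ω - 1|^3 ∂μ) := by linarith
  _ ≤ _ := by nlinarith [mul_nonneg (pow_nonneg hp0.le 3) h3nn]
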